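/- Under the assumptions of the abstract localization principle, combining it with the coercivity-based residual bound yields the localized a posteriori error estimate: if a is coercive with constant α, u solves a(u,·) = l, u_rb ∈ V_rb is a Galerkin approximation with residual R(v) = l(v) - a(u_rb, v) satisfying R(v) = R(Pv) for all v (with P a stable decomposition map with stability constant C as above), then ‖u - u_rb‖ ≤ α^{-1} C (Σ_{η ∈ N} ‖R|_{V_η}‖²_{V_η'})^{1/2}. -/
import Mathlib
set_option maxHeartbeats 1000000
set_option synthInstance.maxHeartbeats 400000


/-- Localized a posteriori error estimate: combining coercivity of `a` (with
constant `α`) and the abstract localization principle (with stable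
decomposition map `P` and stability constant `C`) yields
`‖u - u_rb‖ ≤ α⁻¹ C (Σ_η ‖R|_{V_η}‖²)^{1/2}` for the residual
`R = l - a(u_rb, ·)`. -/
theorem stmt4
    {V : Type*} [NormedAddCommGroup V] [InnerProductSpace ℝ V] [CompleteSpace V]
    {ι : Type*} [Fintype ι]
    (a : V →L[ℝ] V →L[ℝ] ℝ) (α : ℝ) (hα : 0 < α)
    (hcoer : ∀ v : V, α * ‖v‖ ^ 2 ≤ a v v)
    (l : V →L[ℝ] ℝ)
    (u : V) (hu : ∀ v : V, a u v = l v)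
    (Vrb : Submodule ℝ V) (urb : V) (hurb : urb ∈ Vrb)
    (hGal : ∀ v ∈ Vrb, a urb v = l v)
    (Vs : ι → Submodule ℝ V) (hVs : ∀ η, IsClosed (Vs η : Set V))
    (P : V →ₗ[ℝ] V) (C : ℝ) (hC : 0 ≤ C)
    (hdecomp : ∀ v : V, ∃ w : ι → V, (∀ η, w η ∈ Vs η) ∧ P v = ∑ η, w η ∧
      ∑ η, ‖w η‖ ^ 2 ≤ C ^ 2 * ‖v‖ ^ 2)
    (hRP : ∀ v : V, (l - a urb) v = (l - a urb) (P v)) :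
    ‖u - urb‖ ≤
      α⁻¹ * C * Real.sqrt (∑ η, ‖(l - a urb).comp (Vs η).subtypeL‖ ^ 2) := by
  set R : V →L[ℝ] ℝ := l - a urb with hRdef
  set e : V := u - urb with hedef
  set S : ℝ := Real.sqrt (∑ η, ‖R.comp (Vs η).subtypeL‖ ^ 2) with hSdef
  have hSnn : 0 ≤ S := Real.sqrt_nonneg _
  have key : ∀ v : V, R v ≤ C * S * ‖v‖ := by
    intro v
    obtain ⟨w, hw, hPw, hsum⟩ := hdecomp v
    have h1 : R v = ∑ η, R (w η) := by rw [hRP v, hPw, map_sum]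
    have h2 : ∀ η, R (w η) ≤ ‖R.comp (Vs η).subtypeL‖ * ‖w η‖ := by
      intro η
      have he1 : R (w η) = (R.comp (Vs η).subtypeL) ⟨w η, hw η⟩ := rfl
      have he2 : ‖(⟨w η, hw η⟩ : Vs η)‖ = ‖w η‖ := rfl
      calc R (w η) ≤ ‖(R.comp (Vs η).subtypeL) ⟨w η, hw η⟩‖ := by
            rw [he1]; exact le_abs_self _
        _ ≤ ‖R.comp (Vs η).subtypeL‖ * ‖(⟨w η, hw η⟩ : Vs η)‖ :=
            ContinuousLinearMap.le_opNorm _ _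
        _ = ‖R.comp (Vs η).subtypeL‖ * ‖w η‖ := by rw [he2]
    have h3 : R v ≤ ∑ η, ‖R.comp (Vs η).subtypeL‖ * ‖w η‖ := by
      rw [h1]; exact Finset.sum_le_sum fun η _ => h2 η
    have hcs : (∑ η, ‖R.comp (Vs η).subtypeL‖ * ‖w η‖) ^ 2 ≤
        (∑ η, ‖R.comp (Vs η).subtypeL‖ ^ 2) * (∑ η, ‖w η‖ ^ 2) :=
      Finset.sum_mul_sq_le_sq_mul_sq _ _ _
    have hnn : 0 ≤ ∑ η, ‖R.comp (Vs η).subtypeL‖ * ‖w η‖ :=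
      Finset.sum_nonneg fun η _ => mul_nonneg (ContinuousLinearMap.opNorm_nonneg _) (norm_nonneg _)
    have h4 : (∑ η, ‖R.comp (Vs η).subtypeL‖ * ‖w η‖) ≤ S * Real.sqrt (∑ η, ‖w η‖ ^ 2) := by
      rw [hSdef, ← Real.sqrt_mul (Finset.sum_nonneg fun _ _ => sq_nonneg _)]
      calc (∑ η, ‖R.comp (Vs η).subtypeL‖ * ‖w η‖)
          = Real.sqrt ((∑ η, ‖R.comp (Vs η).subtypeL‖ * ‖w η‖) ^ 2) := by
            rw [Real.sqrt_sq hnn]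
        _ ≤ _ := Real.sqrt_le_sqrt hcs
    have h5 : Real.sqrt (∑ η, ‖w η‖ ^ 2) ≤ C * ‖v‖ := by
      have : Real.sqrt (∑ η, ‖w η‖ ^ 2) ≤ Real.sqrt (C ^ 2 * ‖v‖ ^ 2) :=
        Real.sqrt_le_sqrt hsum
      rwa [show C ^ 2 * ‖v‖ ^ 2 = (C * ‖v‖) ^ 2 by ring,
        Real.sqrt_sq (mul_nonneg hC (norm_nonneg _))] at this
    calc R v ≤ S * Real.sqrt (∑ η, ‖w η‖ ^ 2) := h3.trans h4
      _ ≤ S * (C * ‖v‖) := by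
          exact mul_le_mul_of_nonneg_left h5 hSnn
      _ = C * S * ‖v‖ := by ring
  have hae : a e e = R e := by
    simp only [hedef, hRdef, map_sub, ContinuousLinearMap.sub_apply,
      ContinuousLinearMap.coe_sub', Pi.sub_apply]
    rw [hu u, hu urb]
  have hchain : α * ‖e‖ ^ 2 ≤ C * S * ‖e‖ := (hcoer e).trans (hae ▸ key e)
  rcases eq_or_ne e 0 with h0 | h0
  · rw [hedef] at h0 ⊢
    rw [h0, norm_zero]
    positivity
  · have hne : 0 < ‖e‖ := norm_pos_iff.mpr h0
    rw [hedef] at hne hchain ⊢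
    have h1 : α * ‖u - urb‖ ≤ C * S :=
      le_of_mul_le_mul_right (by nlinarith [hchain]) hne
    calc ‖u - urb‖ = α⁻¹ * (α * ‖u - urb‖) := by field_simp
      _ ≤ α⁻¹ * (C * S) := mul_le_mul_of_nonneg_left h1 (inv_nonneg.2 hα.le)
      _ = α⁻¹ * C * S := by ring
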